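/- For the bidirected pentagon C5 over an alphabet of two letters, the public guessing number is strictly smaller than the private entropy (equivalently, the guessing number): g^public(C5,2) ≤ 5 − log_2 7 < log_2 5 = E(C5,2) = g(C5,2). -/

import Mathlib

open Finset

/-! ## Basic setup: directed graphs, guessing games, entropy (Riis, "Graph Entropy,
Network Coding and Guessing games"). -/

/-- The set `N⁻(j)` of in-neighbours of a vertex `j` in the directed graph given by
the edge relation `E` (an edge `(i,j)` is `E i j`). -/
def inNbr {V : Type*} [Fintype V] (E : V → V → Prop) [DecidableRel E] (j : V) : Finset V :=
  Finset.univ.filter (fun i => E i j)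

/-- `p` is a probability distribution on `V → A`. -/
def IsProbDist {V A : Type*} [Fintype V] [DecidableEq V] [Fintype A] (p : (V → A) → ℝ) : Prop :=
  (∀ x, 0 ≤ p x) ∧ ∑ x : V → A, p x = 1

/-- The marginal probability, under `p`, that the coordinates in `S` agree with `y`. -/
noncomputable def marginalPMF {V A : Type*} [Fintype V] [DecidableEq V] [Fintype A] [DecidableEq A]
    (p : (V → A) → ℝ) (S : Finset V) (y : ↥S → A) : ℝ :=
  ∑ x : V → A, if ∀ i : ↥S, x i.1 = y i then p x else 0

/-- `Hent s p S` : the base-`s` Shannon entropy of the marginal of `p` on the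
coordinates in `S` (using `Real.negMulLog`, so the convention `0·log(1/0) = 0` holds). -/
noncomputable def Hent {V A : Type*} [Fintype V] [DecidableEq V] [Fintype A] [DecidableEq A]
    (s : ℕ) (p : (V → A) → ℝ) (S : Finset V) : ℝ :=
  (∑ y : ↥S → A, Real.negMulLog (marginalPMF p S y)) / Real.log s

/-- `p` satisfies the information constraints of the graph: `H(j | N⁻(j)) = 0` for every
vertex `j`, where `H(X | Y) = H(X ∪ Y) − H(Y)`. -/
def InfoConstraints {V A : Type*} [Fintype V] [DecidableEq V] [Fintype A] [DecidableEq A]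
    (E : V → V → Prop) [DecidableRel E] (s : ℕ) (p : (V → A) → ℝ) : Prop :=
  ∀ j : V, Hent s p (insert j (inNbr E j)) - Hent s p (inNbr E j) = 0

/-- The (private) entropy `E(G,s)` of the graph over an alphabet of size `s`:
the sup of `H_p(V)` over probability distributions on `A^V` (`A = Fin s`)
satisfying the information constraints of the graph. -/
noncomputable def graphEntropy {V : Type*} [Fintype V] [DecidableEq V]
    (E : V → V → Prop) [DecidableRel E] (s : ℕ) : ℝ :=
  sSup {h : ℝ | ∃ p : (V → Fin s) → ℝ,
    IsProbDist p ∧ InfoConstraints E s p ∧ h = Hent s p Finset.univ}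

/-- The general entropy `E(G) = sup_{s ≥ 2} E(G,s)`. -/
noncomputable def genEntropy {V : Type*} [Fintype V] [DecidableEq V]
    (E : V → V → Prop) [DecidableRel E] : ℝ :=
  sSup {h : ℝ | ∃ s : ℕ, 2 ≤ s ∧ h = graphEntropy E s}

/-- A guessing strategy: each vertex `j` guesses a value `g j x` which may only depend on
the values `x i` for in-neighbours `i` of `j`. -/
def IsStrategy {V A : Type*} (E : V → V → Prop) (g : V → (V → A) → A) : Prop :=
  ∀ j x y, (∀ i, E i j → x i = y i) → g j x = g j y

/-- The set of assignments at which all players guess correctly. -/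
def correctSet {V A : Type*} [Fintype V] [DecidableEq V] [Fintype A] [DecidableEq A]
    (g : V → (V → A) → A) : Finset (V → A) :=
  Finset.univ.filter (fun x => ∀ j, g j x = x j)

/-- The maximal number of assignments at which all players guess correctly,
over all guessing strategies (over the alphabet `Fin s`). -/
noncomputable def maxCorrect {V : Type*} [Fintype V] [DecidableEq V]
    (E : V → V → Prop) [DecidableRel E] (s : ℕ) : ℕ :=
  sSup {m : ℕ | ∃ g : V → (V → Fin s) → Fin s, IsStrategy E g ∧ m = (correctSet g).card}

/-- The maximal probability (with `x` uniform on `A^V`) that all players guess correctly. -/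
noncomputable def maxProb {V : Type*} [Fintype V] [DecidableEq V]
    (E : V → V → Prop) [DecidableRel E] (s : ℕ) : ℝ :=
  (maxCorrect E s : ℝ) / (s : ℝ) ^ Fintype.card V

/-- The guessing number `g(G,s)`: the unique `α` with maximal success probability
`(1/s)^(n−α)`, i.e. `α = n + log_s (maximal probability)`. -/
noncomputable def guessingNumber {V : Type*} [Fintype V] [DecidableEq V]
    (E : V → V → Prop) [DecidableRel E] (s : ℕ) : ℝ :=
  (Fintype.card V : ℝ) + Real.logb s (maxProb E s)

/-- The general guessing number `g(G) = sup_{s ≥ 2} g(G,s)`. -/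
noncomputable def genGuessing {V : Type*} [Fintype V] [DecidableEq V]
    (E : V → V → Prop) [DecidableRel E] : ℝ :=
  sSup {h : ℝ | ∃ s : ℕ, 2 ≤ s ∧ h = guessingNumber E s}

/-! ## Entropy-like functions -/

/-- An S-entropy-like function: `f ∅ = 0`, monotone and submodular (the polymatroidal
axioms, equivalently Shannon's information inequalities). -/
def SEntLike {U : Type*} [DecidableEq U] (f : Finset U → ℝ) : Prop :=
  f ∅ = 0 ∧ (∀ X Y, X ⊆ Y → f X ≤ f Y) ∧ ∀ X Y, f (X ∩ Y) + f (X ∪ Y) ≤ f X + f Y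

/-- Mutual information `I_f(X;Y|Z)` of an entropy-like function. -/
def mutI {U : Type*} [DecidableEq U] (f : Finset U → ℝ) (X Y Z : Finset U) : ℝ :=
  f (X ∪ Z) + f (Y ∪ Z) - f (X ∪ Y ∪ Z) - f Z

/-- A Zhang–Yeung entropy-like function: S-entropy-like and satisfying the ZY
non-Shannon information inequality for all `A B C D`. -/
def ZYEntLike {U : Type*} [DecidableEq U] (f : Finset U → ℝ) : Prop :=
  SEntLike f ∧ ∀ A B C D : Finset U,
    2 * mutI f C D ∅ ≤ mutI f A B ∅ + mutI f A (C ∪ D) ∅ + 3 * mutI f C D A + mutI f C D B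

/-- `f` satisfies the information constraints of the graph:
`f(N⁻(j) ∪ {j}) = f(N⁻(j))` for every vertex `j`. -/
def FConstraints {V : Type*} [Fintype V] [DecidableEq V]
    (E : V → V → Prop) [DecidableRel E] (f : Finset V → ℝ) : Prop :=
  ∀ j : V, f (insert j (inNbr E j)) = f (inNbr E j)

/-- The S-entropy `E_S(G)`: the maximal value of `f(V)` over normalized S-entropy-like
functions satisfying the information constraints of `G`. -/
noncomputable def SEnt {V : Type*} [Fintype V] [DecidableEq V]
    (E : V → V → Prop) [DecidableRel E] : ℝ :=
  sSup {h : ℝ | ∃ f : Finset V → ℝ,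
    SEntLike f ∧ (∀ j : V, f {j} ≤ 1) ∧ FConstraints E f ∧ h = f Finset.univ}

/-- The ZY-entropy `E_ZY(G)`. -/
noncomputable def ZYEnt {V : Type*} [Fintype V] [DecidableEq V]
    (E : V → V → Prop) [DecidableRel E] : ℝ :=
  sSup {h : ℝ | ∃ f : Finset V → ℝ,
    ZYEntLike f ∧ (∀ j : V, f {j} ≤ 1) ∧ FConstraints E f ∧ h = f Finset.univ}

/-! ## Acyclicity -/

/-- The subgraph induced on `S` is acyclic: no directed cycle within `S`. -/
def AcyclicOn {V : Type*} (E : V → V → Prop) (S : Finset V) : Prop :=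
  ∀ v ∈ S, ¬ Relation.TransGen (fun a b => a ∈ S ∧ b ∈ S ∧ E a b) v v

/-- The acyclic independence number: the maximal size of a vertex set inducing an
acyclic subgraph. -/
noncomputable def acycIndepNum {V : Type*} [Fintype V] (E : V → V → Prop) : ℕ :=
  sSup {k : ℕ | ∃ S : Finset V, AcyclicOn E S ∧ k = S.card}

/-! ## Index codes -/

/-- An index code protocol: a broadcast map `Φ` together with decoding functions `d j`
(depending only on the in-neighbour values and the broadcast message) recovering `x j`. -/
def IsIndexCode {V A W : Type*} (E : V → V → Prop)
    (Φ : (V → A) → W) (d : V → (V → A) → W → A) : Prop :=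
  (∀ (j : V) (x y : V → A) (w : W), (∀ i, E i j → x i = y i) → d j x w = d j y w) ∧
  ∀ (x : V → A) (j : V), d j x (Φ x) = x j

/-- The length `log_s |Φ(A^V)|` of an index code protocol. -/
noncomputable def protocolLength {V A W : Type*} [Fintype V] [DecidableEq V] [Fintype A]
    [Fintype W] [DecidableEq W] (s : ℕ) (Φ : (V → A) → W) : ℝ :=
  Real.logb s ((Finset.univ.image Φ).card)

/-- The base-`s` entropy of the broadcast message `Φ(x)` for `x` uniform on `A^V`. -/
noncomputable def protocolEntropy {V A W : Type*} [Fintype V] [DecidableEq V] [Fintype A]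
    [DecidableEq A] [Fintype W] [DecidableEq W] (s : ℕ) (Φ : (V → A) → W) : ℝ :=
  (∑ w : W, Real.negMulLog
    (((Finset.univ.filter (fun x : V → A => Φ x = w)).card : ℝ) / (s : ℝ) ^ Fintype.card V))
    / Real.log s

/-- `i(G,s)`: the minimal length of an index code for `G` over `Fin s`. -/
noncomputable def indexCodeLen {V : Type*} [Fintype V] [DecidableEq V]
    (E : V → V → Prop) [DecidableRel E] (s : ℕ) : ℝ :=
  sInf {h : ℝ | ∃ (W : Type) (iW : Fintype W) (dW : DecidableEq W)
    (Φ : (V → Fin s) → W) (d : V → (V → Fin s) → W → Fin s),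
    IsIndexCode E Φ d ∧ h = @protocolLength V (Fin s) W _ _ _ iW dW s Φ}

/-- `i_entro(G,s)`: the minimal entropy of an index code for `G` over `Fin s`. -/
noncomputable def indexCodeEntro {V : Type*} [Fintype V] [DecidableEq V]
    (E : V → V → Prop) [DecidableRel E] (s : ℕ) : ℝ :=
  sInf {h : ℝ | ∃ (W : Type) (iW : Fintype W) (dW : DecidableEq W)
    (Φ : (V → Fin s) → W) (d : V → (V → Fin s) → W → Fin s),
    IsIndexCode E Φ d ∧ h = @protocolEntropy V (Fin s) W _ _ _ _ iW dW s Φ}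

/-- The information constraints on `V ∪ {w}` (`w = none`) used to define the S/ZY-minimal
index code: `f(N⁻(j) ∪ {w} ∪ {j}) = f(N⁻(j) ∪ {w})` for each `j`, `f(V ∪ {w}) = f(V)`
and `f(V) = n`. -/
def WConstraints {V : Type*} [Fintype V] [DecidableEq V]
    (E : V → V → Prop) [DecidableRel E] (f : Finset (Option V) → ℝ) : Prop :=
  (∀ j : V, f (insert (some j) (insert none ((inNbr E j).image some)))
      = f (insert none ((inNbr E j).image some))) ∧
  f (insert none ((Finset.univ : Finset V).image some))
      = f ((Finset.univ : Finset V).image some) ∧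
  f ((Finset.univ : Finset V).image some) = (Fintype.card V : ℝ)

/-- The S-minimal index code `i_S(G)`. -/
noncomputable def iS {V : Type*} [Fintype V] [DecidableEq V]
    (E : V → V → Prop) [DecidableRel E] : ℝ :=
  sInf {h : ℝ | ∃ f : Finset (Option V) → ℝ,
    SEntLike f ∧ (∀ j : V, f {some j} ≤ 1) ∧ WConstraints E f ∧ h = f {none}}

/-- The ZY-minimal index code `i_ZY(G)`. -/
noncomputable def iZY {V : Type*} [Fintype V] [DecidableEq V]
    (E : V → V → Prop) [DecidableRel E] : ℝ :=
  sInf {h : ℝ | ∃ f : Finset (Option V) → ℝ,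
    ZYEntLike f ∧ (∀ j : V, f {some j} ≤ 1) ∧ WConstraints E f ∧ h = f {none}}

/-! ## The bidirected pentagon `C5` -/

/-- The pentagon with bidirected edges: vertices `Fin 5`, edges between cyclically
adjacent vertices. -/
def E5 : Fin 5 → Fin 5 → Prop := fun i j => (i.1 + 1) % 5 = j.1 ∨ (j.1 + 1) % 5 = i.1

instance : DecidableRel E5 := fun i j => by unfold E5; infer_instance
section Comb
set_option maxRecDepth 100000

def NotConf (x y : Fin 5 → Fin 2) : Prop :=
  ∀ j, (∀ i ∈ inNbr E5 j, x i = y i) → x j = y j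

instance (x y : Fin 5 → Fin 2) : Decidable (NotConf x y) := by unfold NotConf; infer_instance

def phi (x : Fin 5 → Fin 2) : ℕ :=
  (x 0).val + 2 * (x 1).val + 4 * (x 2).val + 8 * (x 3).val + 16 * (x 4).val

def good (n : ℕ) : Prop := Nat.testBit 4220178633 n = true

instance (n : ℕ) : Decidable (good n) := by unfold good; infer_instance

lemma phi_lt (x : Fin 5 → Fin 2) : phi x < 32 := by
  have h0 := (x 0).isLt; have h1 := (x 1).isLt; have h2 := (x 2).isLt
  have h3 := (x 3).isLt; have h4 := (x 4).isLt
  unfold phi; omega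

lemma key : ∀ x y : Fin 5 → Fin 2, NotConf x y ↔ good (phi x ^^^ phi y) := by decide

lemma phi_inj : ∀ x y : Fin 5 → Fin 2, phi x = phi y → x = y := by decide

end Comb

section Comb2
set_option maxRecDepth 100000

def P1 (b c d e f : ℕ) : Prop := ∀ a < b, ¬(good a ∧ good (a ^^^ b) ∧ good (a ^^^ c) ∧
  good (a ^^^ d) ∧ good (a ^^^ e) ∧ good (a ^^^ f))
instance (b c d e f : ℕ) : Decidable (P1 b c d e f) := by unfold P1; infer_instance
def P2 (c d e f : ℕ) : Prop := ∀ b < c, (good b ∧ good (b ^^^ c) ∧ good (b ^^^ d) ∧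
  good (b ^^^ e) ∧ good (b ^^^ f)) → P1 b c d e f
instance (c d e f : ℕ) : Decidable (P2 c d e f) := by unfold P2; infer_instance
def P3 (d e f : ℕ) : Prop := ∀ c < d, (good c ∧ good (c ^^^ d) ∧ good (c ^^^ e) ∧
  good (c ^^^ f)) → P2 c d e f
instance (d e f : ℕ) : Decidable (P3 d e f) := by unfold P3; infer_instance
def P4 (e f : ℕ) : Prop := ∀ d < e, (good d ∧ good (d ^^^ e) ∧ good (d ^^^ f)) → P3 d e f
instance (e f : ℕ) : Decidable (P4 e f) := by unfold P4; infer_instance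
def P5 (f : ℕ) : Prop := ∀ e < f, (good e ∧ good (e ^^^ f)) → P4 e f
instance (f : ℕ) : Decidable (P5 f) := by unfold P5; infer_instance

lemma no6 : ∀ f < 32, good f → P5 f := by decide

lemma xor_middle (a b t : ℕ) : (a ^^^ t) ^^^ (b ^^^ t) = a ^^^ b := by
  rw [Nat.xor_assoc, Nat.xor_comm b t, ← Nat.xor_assoc t t b, Nat.xor_self, Nat.zero_xor]

/-- The key combinatorial fact: a pairwise non-confusable set has at most 5 elements. -/
lemma card_le_five (S : Finset (Fin 5 → Fin 2)) (h : ∀ x ∈ S, ∀ y ∈ S, NotConf x y) :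
    S.card ≤ 5 := by
  by_contra hc
  push_neg at hc
  obtain ⟨T, hTS, hT6⟩ := Finset.exists_subset_card_eq (show 6 ≤ S.card from hc)
  obtain ⟨x0, hx0⟩ := Finset.card_pos.mp (show 0 < T.card by omega)
  have hT : ∀ x ∈ T, ∀ y ∈ T, NotConf x y := fun x hx y hy => h x (hTS hx) y (hTS hy)
  set ψ : (Fin 5 → Fin 2) → ℕ := fun x => phi x ^^^ phi x0 with hψ
  have hinj : Set.InjOn ψ T := by
    intro a _ b _ hab
    apply phi_inj
    have := congrArg (· ^^^ phi x0) hab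
    simpa [hψ, Nat.xor_assoc, Nat.xor_self, Nat.xor_zero] using this
  set U : Finset ℕ := T.image ψ with hU
  have hU6 : U.card = 6 := by rw [hU, Finset.card_image_of_injOn hinj, hT6]
  have hUprop : ∀ n ∈ U, n < 32 ∧ good n := by
    intro n hn
    obtain ⟨x, hx, rfl⟩ := Finset.mem_image.mp hn
    constructor
    · have : (32 : ℕ) = 2 ^ 5 := by norm_num
      rw [hψ]; simp only
      rw [this]
      exact Nat.xor_lt_two_pow (by have := phi_lt x; omega) (by have := phi_lt x0; omega)
    · exact (key x x0).mp (hT x hx x0 hx0)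
  have hpair : ∀ m ∈ U, ∀ n ∈ U, good (m ^^^ n) := by
    intro m hm n hn
    obtain ⟨x, hx, rfl⟩ := Finset.mem_image.mp hm
    obtain ⟨y, hy, rfl⟩ := Finset.mem_image.mp hn
    rw [hψ]; simp only
    rw [xor_middle]
    exact (key x y).mp (hT x hx y hy)
  -- sort U
  have hlen : (U.sort (· ≤ ·)).length = 6 := by rw [Finset.length_sort, hU6]
  obtain ⟨a, b, c, d, e, f, hl⟩ :
      ∃ a b c d e f, U.sort (· ≤ ·) = [a, b, c, d, e, f] := by
    rcases hls : U.sort (· ≤ ·) with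
      _ | ⟨a, _ | ⟨b, _ | ⟨c, _ | ⟨d, _ | ⟨e, _ | ⟨f, _ | ⟨g, r⟩⟩⟩⟩⟩⟩⟩ <;>
      rw [hls] at hlen <;> simp_all
  have hsorted := List.sortedLT_iff_pairwise.mp (Finset.sortedLT_sort U)
  rw [hl] at hsorted
  simp only [List.pairwise_cons, List.mem_cons, List.not_mem_nil, or_false,
    List.mem_singleton, List.mem_nil_iff] at hsorted
  obtain ⟨H1, H2, H3, H4, H5, -⟩ := hsorted
  have hab : a < b := H1 b (by tauto)
  have hbc : b < c := H2 c (by tauto)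
  have hcd : c < d := H3 d (by tauto)
  have hde : d < e := H4 e (by tauto)
  have hef : e < f := H5 f (by tauto)
  have hmem : ∀ n ∈ ([a, b, c, d, e, f] : List ℕ), n ∈ U := by
    intro n hn
    rw [← Finset.mem_sort (α := ℕ) (· ≤ ·), hl]
    exact hn
  have ha : a ∈ U := hmem a (by simp)
  have hb : b ∈ U := hmem b (by simp)
  have hcm : c ∈ U := hmem c (by simp)
  have hd : d ∈ U := hmem d (by simp)
  have he : e ∈ U := hmem e (by simp)
  have hf : f ∈ U := hmem f (by simp)
  exact no6 f (hUprop f hf).1 (hUprop f hf).2 e hef ⟨(hUprop e he).2, hpair e he f hf⟩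
    d hde ⟨(hUprop d hd).2, hpair d hd e he, hpair d hd f hf⟩
    c hcd ⟨(hUprop c hcm).2, hpair c hcm d hd, hpair c hcm e he, hpair c hcm f hf⟩
    b hbc ⟨(hUprop b hb).2, hpair b hb c hcm, hpair b hb d hd, hpair b hb e he, hpair b hb f hf⟩
    a hab ⟨(hUprop a ha).2, hpair a ha b hb, hpair a ha c hcm, hpair a ha d hd, hpair a ha e he,
      hpair a ha f hf⟩

end Comb2

section Part1
set_option maxRecDepth 100000

/-- Every index-code fiber is pairwise non-confusable. -/
lemma fiber_notconf {W : Type} (Φ : (Fin 5 → Fin 2) → W) (d : Fin 5 → (Fin 5 → Fin 2) → W → Fin 2)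
    (hcode : IsIndexCode E5 Φ d) (x y : Fin 5 → Fin 2) (hxy : Φ x = Φ y) : NotConf x y := by
  intro j hagree
  have h1 : d j x (Φ x) = x j := hcode.2 x j
  have h2 : d j y (Φ y) = y j := hcode.2 y j
  have h3 : d j x (Φ x) = d j y (Φ x) := by
    apply hcode.1 j x y (Φ x)
    intro i hi
    exact hagree i (by simp [inNbr, hi])
  rw [hxy] at h1 h3
  rw [← h1, h3, h2]

lemma seven_le_image {W : Type} [Fintype W] [DecidableEq W] (Φ : (Fin 5 → Fin 2) → W)
    (d : Fin 5 → (Fin 5 → Fin 2) → W → Fin 2) (hcode : IsIndexCode E5 Φ d) :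
    7 ≤ (Finset.univ.image Φ).card := by
  have hcard : (Finset.univ : Finset (Fin 5 → Fin 2)).card = 32 := by
    simp [Fintype.card_fun]
  have hsum := Finset.card_eq_sum_card_image Φ (Finset.univ : Finset (Fin 5 → Fin 2))
  have hfib : ∀ w ∈ Finset.univ.image Φ,
      (Finset.univ.filter (fun x : Fin 5 → Fin 2 => Φ x = w)).card ≤ 5 := by
    intro w _
    apply _root_.card_le_five
    intro x hx y hy
    rw [Finset.mem_filter] at hx hy
    exact fiber_notconf Φ d hcode x y (hx.2.trans hy.2.symm)
  have hb : (Finset.univ : Finset (Fin 5 → Fin 2)).card ≤ (Finset.univ.image Φ).card * 5 := by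
    rw [hsum]
    exact Finset.sum_le_card_nsmul _ _ 5 hfib
  omega

lemma logb7_le_indexCodeLen : Real.logb 2 7 ≤ indexCodeLen E5 2 := by
  apply le_csInf
  · refine ⟨Real.logb 2 ((Finset.univ.image (id : (Fin 5 → Fin 2) → (Fin 5 → Fin 2))).card),
      (Fin 5 → Fin 2), inferInstance, inferInstance, id, fun j _ w => w j, ⟨?_, ?_⟩, rfl⟩
    · intro j x y w _; rfl
    · intro x j; rfl
  · rintro h ⟨W, iW, dW, Φ, d, hcode, rfl⟩
    unfold protocolLength
    have h7 := @seven_le_image W iW dW Φ d hcode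
    apply Real.logb_le_logb_of_le (by norm_num : (1:ℝ) < 2) (by norm_num)
    exact_mod_cast h7

end Part1

section Part4
set_option maxRecDepth 100000

/-- A maximum independent set in the confusion graph of the pentagon. -/
def Sstar : Finset (Fin 5 → Fin 2) :=
  {![0,0,0,0,0], ![1,1,0,0,0], ![0,0,1,1,0], ![1,1,0,1,1], ![1,0,1,1,1]}

lemma Sstar_card : Sstar.card = 5 := by decide

lemma Sstar_pair : ∀ x ∈ Sstar, ∀ y ∈ Sstar, NotConf x y := by decide

/-- For any strategy, the correct set is pairwise non-confusable. -/
lemma correct_notconf (g : Fin 5 → (Fin 5 → Fin 2) → Fin 2) (hg : IsStrategy E5 g)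
    (x y : Fin 5 → Fin 2) (hx : x ∈ correctSet g) (hy : y ∈ correctSet g) : NotConf x y := by
  simp only [correctSet, Finset.mem_filter] at hx hy
  intro j hagree
  have := hg j x y (fun i hi => hagree i (by simp [inNbr, hi]))
  rw [← hx.2 j, ← hy.2 j, this]

def cands (j : Fin 5) (x : Fin 5 → Fin 2) : Finset (Fin 5 → Fin 2) :=
  Sstar.filter (fun y => ∀ i ∈ inNbr E5 j, x i = y i)

def gstar (j : Fin 5) (x : Fin 5 → Fin 2) : Fin 2 :=
  if (1 : Fin 2) ∈ (cands j x).image (fun y => y j) then 1 else 0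

lemma gstar_strategy : IsStrategy E5 gstar := by
  intro j x y hxy
  have hc : cands j x = cands j y := by
    apply Finset.filter_congr
    intro z _
    constructor
    · intro h i hi; rw [← hxy i (by simpa [inNbr] using hi)]; exact h i hi
    · intro h i hi; rw [hxy i (by simpa [inNbr] using hi)]; exact h i hi
  rw [gstar, gstar, hc]

lemma gstar_correct : ∀ x ∈ Sstar, ∀ j, gstar j x = x j := by
  intro x hx j
  have hxc : x ∈ cands j x := Finset.mem_filter.mpr ⟨hx, fun i _ => rfl⟩
  have himg : ∀ v ∈ (cands j x).image (fun y => y j), v = x j := by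
    intro v hv
    obtain ⟨y, hy, rfl⟩ := Finset.mem_image.mp hv
    rw [cands, Finset.mem_filter] at hy
    exact (Sstar_pair x hx y hy.1 j hy.2).symm
  have hxj : x j ∈ (cands j x).image (fun y => y j) := Finset.mem_image_of_mem _ hxc
  rcases (by omega : x j = 0 ∨ x j = 1) with h0 | h1
  · rw [gstar, if_neg, h0]
    intro hmem
    have := himg 1 hmem
    rw [h0] at this
    exact absurd this (by decide)
  · rw [gstar, if_pos (h1 ▸ hxj), h1]

lemma maxCorrect_eq : maxCorrect E5 2 = 5 := by
  have hbound : ∀ m ∈ {m : ℕ | ∃ g : Fin 5 → (Fin 5 → Fin 2) → Fin 2,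
      IsStrategy E5 g ∧ m = (correctSet g).card}, m ≤ 5 := by
    rintro m ⟨g, hg, rfl⟩
    exact card_le_five _ (fun x hx y hy => correct_notconf g hg x y hx hy)
  have hmem : 5 ∈ {m : ℕ | ∃ g : Fin 5 → (Fin 5 → Fin 2) → Fin 2,
      IsStrategy E5 g ∧ m = (correctSet g).card} := by
    refine ⟨gstar, gstar_strategy, ?_⟩
    have hsub : Sstar ⊆ correctSet gstar := by
      intro x hx
      simp only [correctSet, Finset.mem_filter]
      exact ⟨Finset.mem_univ x, fun j => gstar_correct x hx j⟩
    have h1 : 5 ≤ (correctSet gstar).card := by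
      calc 5 = Sstar.card := Sstar_card.symm
        _ ≤ (correctSet gstar).card := Finset.card_le_card hsub
    have h2 : (correctSet gstar).card ≤ 5 :=
      card_le_five _ (fun x hx y hy => correct_notconf gstar gstar_strategy x y hx hy)
    omega
  rw [maxCorrect]
  exact le_antisymm (csSup_le ⟨5, hmem⟩ hbound) (le_csSup ⟨5, hbound⟩ hmem)

lemma logb32 : Real.logb 2 32 = 5 := by
  rw [show (32:ℝ) = 2 ^ (5:ℕ) by norm_num, Real.logb_pow, Real.logb_self_eq_one (by norm_num)]
  norm_num

lemma guessingNumber_eq : guessingNumber E5 2 = Real.logb 2 5 := by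
  rw [guessingNumber, maxProb, maxCorrect_eq, Fintype.card_fin]
  push_cast
  rw [show ((5:ℝ) / 2 ^ (5:ℕ)) = 5 / 32 by norm_num,
    Real.logb_div (by norm_num) (by norm_num), logb32]
  ring

lemma part2 : (5 : ℝ) - Real.logb 2 7 < Real.logb 2 5 := by
  have hm : Real.logb 2 35 = Real.logb 2 7 + Real.logb 2 5 := by
    rw [show (35:ℝ) = 7 * 5 by norm_num, Real.logb_mul (by norm_num) (by norm_num)]
  have hlt : Real.logb 2 32 < Real.logb 2 35 :=
    Real.logb_lt_logb (by norm_num) (by norm_num) (by norm_num)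
  rw [logb32] at hlt
  linarith

end Part4

section Part3
set_option maxRecDepth 100000

variable {p : (Fin 5 → Fin 2) → ℝ}

lemma marg_nonneg (hp : ∀ x, 0 ≤ p x) (S : Finset (Fin 5)) (y : ↥S → Fin 2) :
    0 ≤ marginalPMF p S y := by
  apply Finset.sum_nonneg
  intro x _
  split
  · exact hp x
  · exact le_rfl

lemma le_marg (hp : ∀ x, 0 ≤ p x) (S : Finset (Fin 5)) (y : ↥S → Fin 2)
    (x : Fin 5 → Fin 2) (hxy : ∀ i : ↥S, x i.1 = y i) : p x ≤ marginalPMF p S y := by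
  have h := Finset.single_le_sum
    (f := fun x' => if ∀ i : ↥S, x' i.1 = y i then p x' else 0)
    (fun x' _ => by split; exacts [hp x', le_rfl]) (Finset.mem_univ x)
  rwa [if_pos hxy] at h

variable {j : Fin 5} {N : Finset (Fin 5)}

/-- Extend a pattern on `N` by the value `a` at `j`. -/
def extp (j : Fin 5) (N : Finset (Fin 5)) (z : ↥N → Fin 2) (a : Fin 2) :
    ↥(insert j N) → Fin 2 :=
  fun i => if h : i.1 ∈ N then z ⟨i.1, h⟩ else a

lemma extp_iff (hj : j ∉ N) (x : Fin 5 → Fin 2) (z : ↥N → Fin 2) (a : Fin 2) :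
    (∀ i : ↥(insert j N), x i.1 = extp j N z a i) ↔ (x j = a ∧ ∀ i : ↥N, x i.1 = z i) := by
  constructor
  · intro h
    refine ⟨?_, ?_⟩
    · have := h ⟨j, Finset.mem_insert_self j N⟩
      rwa [extp, dif_neg hj] at this
    · intro i
      have := h ⟨i.1, Finset.mem_insert_of_mem i.2⟩
      rwa [extp, dif_pos i.2, Subtype.coe_eta] at this
  · rintro ⟨h1, h2⟩ i
    rw [extp]
    by_cases hi : i.1 ∈ N
    · rw [dif_pos hi]; exact h2 ⟨i.1, hi⟩
    · have hij : i.1 = j := (Finset.mem_insert.mp i.2).resolve_right hi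
      rw [dif_neg hi, hij]; exact h1

lemma marg_split (hj : j ∉ N) (z : ↥N → Fin 2) :
    marginalPMF p N z = ∑ a : Fin 2, marginalPMF p (insert j N) (extp j N z a) := by
  unfold marginalPMF
  rw [Finset.sum_comm]
  apply Finset.sum_congr rfl
  intro x _
  have hrw : ∀ a : Fin 2, (if ∀ i : ↥(insert j N), x i.1 = extp j N z a i then p x else 0)
      = if a = x j then (if ∀ i : ↥N, x i.1 = z i then p x else 0) else 0 := by
    intro a
    rw [if_congr (extp_iff hj x z a) rfl rfl]
    by_cases hD : ∀ i : ↥N, x i.1 = z i <;> by_cases ha : a = x j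
    · rw [if_pos ⟨ha.symm, hD⟩, if_pos ha, if_pos hD]
    · rw [if_neg (fun hc => ha hc.1.symm), if_neg ha]
    · rw [if_neg (fun hc => hD hc.2), if_pos ha, if_neg hD]
    · rw [if_neg (fun hc => ha hc.1.symm), if_neg ha]
  rw [Finset.sum_congr rfl (fun a _ => hrw a), Finset.sum_ite_eq' Finset.univ (x j)]
  simp

/-- The reindexing equivalence for patterns on `insert j N`. -/
def extEquiv (j : Fin 5) (N : Finset (Fin 5)) (hj : j ∉ N) :
    ((↥N → Fin 2) × Fin 2) ≃ (↥(insert j N) → Fin 2) where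
  toFun za := extp j N za.1 za.2
  invFun w := (fun i => w ⟨i.1, Finset.mem_insert_of_mem i.2⟩,
    w ⟨j, Finset.mem_insert_self j N⟩)
  left_inv := by
    rintro ⟨z, a⟩
    refine Prod.ext ?_ ?_
    · funext i
      simp only [extp, i.2, dif_pos, Subtype.coe_eta]
    · simp only [extp, dif_neg hj]
  right_inv := by
    intro w
    funext i
    rcases Finset.mem_insert.mp i.2 with hij | hiN
    · simp only [extp]
      rw [dif_neg (by rw [hij]; exact hj)]
      congr 1
      exact Subtype.ext hij.symm
    · simp only [extp, dif_pos hiN, Subtype.coe_eta]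

lemma sum_ext (hj : j ∉ N) (F : (↥(insert j N) → Fin 2) → ℝ) :
    ∑ w : ↥(insert j N) → Fin 2, F w
      = ∑ z : ↥N → Fin 2, ∑ a : Fin 2, F (extp j N z a) := by
  rw [← Equiv.sum_comp (extEquiv j N hj) F, Fintype.sum_prod_type]
  rfl

lemma hent_diff (hj : j ∉ N) :
    Hent 2 p (insert j N) - Hent 2 p N
      = (∑ z : ↥N → Fin 2,
          ((∑ a : Fin 2, Real.negMulLog (marginalPMF p (insert j N) (extp j N z a)))
            - Real.negMulLog (∑ a : Fin 2, marginalPMF p (insert j N) (extp j N z a))))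
        / Real.log ((2:ℕ):ℝ) := by
  unfold Hent
  rw [div_sub_div_same]
  congr 1
  rw [sum_ext hj (fun w => Real.negMulLog (marginalPMF p (insert j N) w)),
    ← Finset.sum_sub_distrib]
  exact Finset.sum_congr rfl (fun z _ => by rw [← marg_split hj z])

lemma nml_subadd {u v : ℝ} (hu : 0 ≤ u) (hv : 0 ≤ v) :
    Real.negMulLog (u + v) ≤ Real.negMulLog u + Real.negMulLog v := by
  rcases hu.eq_or_lt with rfl | hu'
  · simp
  rcases hv.eq_or_lt with rfl | hv'
  · simp
  have h1 : u * Real.log u ≤ u * Real.log (u + v) :=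
    mul_le_mul_of_nonneg_left (Real.log_le_log hu' (by linarith)) hu
  have h2 : v * Real.log v ≤ v * Real.log (u + v) :=
    mul_le_mul_of_nonneg_left (Real.log_le_log hv' (by linarith)) hv
  simp only [Real.negMulLog]
  nlinarith

lemma nml_subadd_strict {u v : ℝ} (hu : 0 < u) (hv : 0 < v) :
    Real.negMulLog (u + v) < Real.negMulLog u + Real.negMulLog v := by
  have h1 : u * Real.log u < u * Real.log (u + v) :=
    mul_lt_mul_of_pos_left (Real.log_lt_log hu (by linarith)) hu
  have h2 : v * Real.log v ≤ v * Real.log (u + v) :=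
    mul_le_mul_of_nonneg_left (Real.log_le_log hv (by linarith)) hv.le
  simp only [Real.negMulLog]
  nlinarith

lemma two_term_zero (m : Fin 2 → ℝ) (h : m 0 = 0 ∨ m 1 = 0) :
    (∑ a : Fin 2, Real.negMulLog (m a)) - Real.negMulLog (∑ a : Fin 2, m a) = 0 := by
  rw [Fin.sum_univ_two, Fin.sum_univ_two]
  rcases h with h | h <;> rw [h] <;> simp

lemma two_term_nonneg (m : Fin 2 → ℝ) (h0 : 0 ≤ m 0) (h1 : 0 ≤ m 1) :
    0 ≤ (∑ a : Fin 2, Real.negMulLog (m a)) - Real.negMulLog (∑ a : Fin 2, m a) := by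
  rw [Fin.sum_univ_two, Fin.sum_univ_two]
  have := nml_subadd h0 h1
  linarith

lemma two_term_pos (m : Fin 2 → ℝ) (h0 : 0 < m 0) (h1 : 0 < m 1) :
    0 < (∑ a : Fin 2, Real.negMulLog (m a)) - Real.negMulLog (∑ a : Fin 2, m a) := by
  rw [Fin.sum_univ_two, Fin.sum_univ_two]
  have := nml_subadd_strict h0 h1
  linarith

lemma exists_of_marg_ne (S : Finset (Fin 5)) (y : ↥S → Fin 2)
    (h : marginalPMF p S y ≠ 0) : ∃ x, p x ≠ 0 ∧ ∀ i : ↥S, x i.1 = y i := by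
  by_contra hc
  push_neg at hc
  apply h
  unfold marginalPMF
  apply Finset.sum_eq_zero
  intro x _
  split
  · next hcond => by_contra hpx; exact absurd (hc x hpx) (by simpa using hcond)
  · rfl

/-- Determinism of vertex `j` given the coordinates in `N`, on the support of `p`. -/
def Detp (p : (Fin 5 → Fin 2) → ℝ) (j : Fin 5) (N : Finset (Fin 5)) : Prop :=
  ∀ x y, p x ≠ 0 → p y ≠ 0 → (∀ i ∈ N, x i = y i) → x j = y j

lemma log2_pos : (0:ℝ) < Real.log ((2:ℕ):ℝ) := by
  have h : ((2:ℕ):ℝ) = 2 := by norm_num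
  rw [h]
  exact Real.log_pos (by norm_num)

lemma hent_eq_of_det (hp : ∀ x, 0 ≤ p x) (hj : j ∉ N) (hdet : Detp p j N) :
    Hent 2 p (insert j N) - Hent 2 p N = 0 := by
  rw [hent_diff hj]
  apply div_eq_zero_iff.mpr
  left
  apply Finset.sum_eq_zero
  intro z _
  apply two_term_zero (fun a => marginalPMF p (insert j N) (extp j N z a))
  by_contra hc
  push_neg at hc
  obtain ⟨h0, h1⟩ := hc
  obtain ⟨x, hpx, hx⟩ := exists_of_marg_ne _ _ h0
  obtain ⟨y, hpy, hy⟩ := exists_of_marg_ne _ _ h1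
  rw [extp_iff hj] at hx hy
  have := hdet x y hpx hpy (fun i hi => by rw [hx.2 ⟨i, hi⟩, hy.2 ⟨i, hi⟩])
  rw [hx.1, hy.1] at this
  exact absurd this (by decide)

lemma det_of_hent_eq (hp : ∀ x, 0 ≤ p x) (hj : j ∉ N)
    (heq : Hent 2 p (insert j N) - Hent 2 p N = 0) : Detp p j N := by
  intro x y hpx hpy hagree
  by_contra hne
  have hfin : ∀ a b : Fin 2, a ≠ b → a = 0 ∧ b = 1 ∨ a = 1 ∧ b = 0 := by decide
  have hmx : p x ≤ marginalPMF p (insert j N) (extp j N (fun i => x i.1) (x j)) :=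
    le_marg hp _ _ x ((extp_iff hj x _ (x j)).mpr ⟨rfl, fun i => rfl⟩)
  have hmy : p y ≤ marginalPMF p (insert j N) (extp j N (fun i => x i.1) (y j)) :=
    le_marg hp _ _ y ((extp_iff hj y _ (y j)).mpr ⟨rfl, fun i => (hagree i.1 i.2).symm⟩)
  have hpx' : 0 < p x := (hp x).lt_of_ne (Ne.symm hpx)
  have hpy' : 0 < p y := (hp y).lt_of_ne (Ne.symm hpy)
  have hm0 : 0 < marginalPMF p (insert j N) (extp j N (fun i => x i.1) 0)
      ∧ 0 < marginalPMF p (insert j N) (extp j N (fun i => x i.1) 1) := by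
    rcases hfin (x j) (y j) hne with ⟨h1, h2⟩ | ⟨h1, h2⟩
    · rw [h1] at hmx; rw [h2] at hmy
      exact ⟨lt_of_lt_of_le hpx' hmx, lt_of_lt_of_le hpy' hmy⟩
    · rw [h1] at hmx; rw [h2] at hmy
      exact ⟨lt_of_lt_of_le hpy' hmy, lt_of_lt_of_le hpx' hmx⟩
  have hpos : 0 < Hent 2 p (insert j N) - Hent 2 p N := by
    rw [hent_diff hj]
    apply div_pos
    · apply Finset.sum_pos'
      · intro z' _
        exact two_term_nonneg (fun a => marginalPMF p (insert j N) (extp j N z' a))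
          (marg_nonneg hp _ _) (marg_nonneg hp _ _)
      · exact ⟨fun i => x i.1, Finset.mem_univ _,
          two_term_pos (fun a => marginalPMF p (insert j N) (extp j N (fun i => x i.1) a))
            hm0.1 hm0.2⟩
    · exact log2_pos
  rw [heq] at hpos
  exact lt_irrefl 0 hpos

lemma hent_univ : Hent 2 p Finset.univ
    = (∑ x, Real.negMulLog (p x)) / Real.log ((2:ℕ):ℝ) := by
  unfold Hent
  congr 1
  have hmarg : ∀ y : ↥(Finset.univ : Finset (Fin 5)) → Fin 2,
      marginalPMF p Finset.univ y = p (fun i => y ⟨i, Finset.mem_univ i⟩) := by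
    intro y
    unfold marginalPMF
    have hcond : ∀ x : Fin 5 → Fin 2,
        (∀ i : ↥(Finset.univ : Finset (Fin 5)), x i.1 = y i)
          ↔ x = fun i => y ⟨i, Finset.mem_univ i⟩ := by
      intro x
      constructor
      · intro h; funext i; exact h ⟨i, Finset.mem_univ i⟩
      · intro h i; rw [h]
    calc ∑ x : Fin 5 → Fin 2,
          (if ∀ i : ↥(Finset.univ : Finset (Fin 5)), x i.1 = y i then p x else 0)
        = ∑ x : Fin 5 → Fin 2,
            (if x = (fun i => y ⟨i, Finset.mem_univ i⟩) then p x else 0) :=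
          Finset.sum_congr rfl (fun x _ => if_congr (hcond x) rfl rfl)
      _ = p (fun i => y ⟨i, Finset.mem_univ i⟩) := by
          rw [Finset.sum_ite_eq' Finset.univ _ p]; simp
  apply Fintype.sum_bijective
    (fun (y : ↥(Finset.univ : Finset (Fin 5)) → Fin 2) => (fun i => y ⟨i, Finset.mem_univ i⟩ :
      Fin 5 → Fin 2))
    (Function.bijective_iff_has_inverse.mpr
      ⟨fun x => (fun i => x i.1), fun y => funext fun i => rfl, fun x => funext fun i => rfl⟩)
  intro y
  rw [hmarg y]

lemma gibbs (hp : ∀ x, 0 ≤ p x) (hs : ∑ x, p x = 1)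
    (hK : (Finset.univ.filter (fun x => p x ≠ 0)).card ≤ 5) :
    ∑ x, Real.negMulLog (p x) ≤ Real.log 5 := by
  set supp := Finset.univ.filter (fun x => p x ≠ 0) with hsupp
  set K := supp.card with hKdef
  have hK1 : 1 ≤ K := by
    by_contra hc
    have h0 : supp = ∅ := Finset.card_eq_zero.mp (by omega)
    have hz : ∀ x, p x = 0 := by
      intro x
      by_contra hx
      have : x ∈ supp := by rw [hsupp]; simp [hx]
      rw [h0] at this; exact absurd this (Finset.notMem_empty x)
    rw [Finset.sum_congr rfl (fun x _ => hz x)] at hs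
    simp at hs
  have hKpos : (0:ℝ) < (K:ℝ) := by exact_mod_cast hK1
  have e1 : ∑ x ∈ supp, p x = ∑ x, p x :=
    Finset.sum_subset (Finset.subset_univ _) (fun x _ hx => by simpa [hsupp] using hx)
  have e2 : ∑ x, Real.negMulLog (p x) = ∑ x ∈ supp, Real.negMulLog (p x) := by
    symm
    apply Finset.sum_subset (Finset.subset_univ _)
    intro x _ hx
    have hx0 : p x = 0 := by simpa [hsupp] using hx
    rw [hx0, Real.negMulLog_zero]
  have perx : ∀ x ∈ supp, Real.negMulLog (p x) ≤ 1/(K:ℝ) - p x + p x * Real.log K := by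
    intro x hx
    have hpxne : p x ≠ 0 := (Finset.mem_filter.mp hx).2
    have hpx : 0 < p x := (hp x).lt_of_ne (Ne.symm hpxne)
    have ht : 0 < 1/(p x * (K:ℝ)) := by positivity
    have hlog := Real.log_le_sub_one_of_pos ht
    rw [one_div, Real.log_inv, Real.log_mul (ne_of_gt hpx) (ne_of_gt hKpos)] at hlog
    have hmul := mul_le_mul_of_nonneg_left hlog hpx.le
    have hinv : p x * ((p x * (K:ℝ))⁻¹ - 1) = 1/(K:ℝ) - p x := by
      field_simp
    rw [hinv] at hmul
    simp only [Real.negMulLog]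
    nlinarith [hmul]
  have hsumle := Finset.sum_le_sum perx
  have hrhs : ∑ x ∈ supp, (1/(K:ℝ) - p x + p x * Real.log K)
      = (K:ℝ) * (1/(K:ℝ)) - 1 + Real.log K := by
    rw [Finset.sum_add_distrib, Finset.sum_sub_distrib, Finset.sum_const, ← Finset.sum_mul, e1,
      hs, nsmul_eq_mul]
    ring
  have hKinv : (K:ℝ) * (1/(K:ℝ)) = 1 := by field_simp
  have hlogK : Real.log K ≤ Real.log 5 := Real.log_le_log hKpos (by exact_mod_cast hK)
  rw [e2]
  calc ∑ x ∈ supp, Real.negMulLog (p x)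
      ≤ (K:ℝ) * (1/(K:ℝ)) - 1 + Real.log K := hrhs ▸ hsumle
    _ = Real.log K := by rw [hKinv]; ring
    _ ≤ Real.log 5 := hlogK

lemma j_notin_inNbr : ∀ j : Fin 5, j ∉ inNbr E5 j := by decide

lemma log2_cast : Real.log ((2:ℕ):ℝ) = Real.log 2 := by norm_num

lemma hent_upper {p : (Fin 5 → Fin 2) → ℝ} (hprob : IsProbDist p)
    (hinfo : InfoConstraints E5 2 p) : Hent 2 p Finset.univ ≤ Real.logb 2 5 := by
  obtain ⟨hp, hs⟩ := hprob
  have hdet : ∀ j : Fin 5, Detp p j (inNbr E5 j) :=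
    fun j => det_of_hent_eq hp (j_notin_inNbr j) (hinfo j)
  have hsupp : (Finset.univ.filter (fun x => p x ≠ 0)).card ≤ 5 := by
    apply _root_.card_le_five
    intro x hx y hy j hagree
    exact hdet j x y (Finset.mem_filter.mp hx).2 (Finset.mem_filter.mp hy).2 hagree
  rw [hent_univ, Real.logb, log2_cast]
  exact div_le_div_of_nonneg_right (gibbs hp hs hsupp) (Real.log_pos (by norm_num)).le

/-- The uniform distribution on `Sstar`. -/
noncomputable def pstar : (Fin 5 → Fin 2) → ℝ := fun x => if x ∈ Sstar then (5:ℝ)⁻¹ else 0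

lemma pstar_nonneg : ∀ x, 0 ≤ pstar x := by
  intro x; rw [pstar]; split <;> norm_num

lemma pstar_prob : IsProbDist pstar := by
  refine ⟨pstar_nonneg, ?_⟩
  unfold pstar
  rw [Finset.sum_ite_mem, Finset.univ_inter, Finset.sum_const, Sstar_card, nsmul_eq_mul]
  norm_num

lemma pstar_mem {x : Fin 5 → Fin 2} (hx : pstar x ≠ 0) : x ∈ Sstar := by
  by_contra hc
  exact hx (by rw [pstar, if_neg hc])

lemma pstar_info : InfoConstraints E5 2 pstar := by
  intro j
  apply hent_eq_of_det pstar_nonneg (j_notin_inNbr j)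
  intro x y hx hy hagree
  exact Sstar_pair x (pstar_mem hx) y (pstar_mem hy) j hagree

lemma pstar_hent : Hent 2 pstar Finset.univ = Real.logb 2 5 := by
  rw [hent_univ]
  have h1 : ∀ x : Fin 5 → Fin 2, Real.negMulLog (pstar x)
      = if x ∈ Sstar then Real.negMulLog ((5:ℝ)⁻¹) else 0 := by
    intro x; rw [pstar]; split <;> simp
  rw [Finset.sum_congr rfl (fun x _ => h1 x), Finset.sum_ite_mem, Finset.univ_inter,
    Finset.sum_const, Sstar_card, nsmul_eq_mul, Real.logb, log2_cast]
  congr 1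
  rw [Real.negMulLog, Real.log_inv]
  push_cast
  ring

lemma graphEntropy_eq : graphEntropy E5 2 = Real.logb 2 5 := by
  have hmem : Real.logb 2 5 ∈ {h : ℝ | ∃ p : (Fin 5 → Fin 2) → ℝ,
      IsProbDist p ∧ InfoConstraints E5 2 p ∧ h = Hent 2 p Finset.univ} :=
    ⟨pstar, pstar_prob, pstar_info, pstar_hent.symm⟩
  have hub : ∀ h ∈ {h : ℝ | ∃ p : (Fin 5 → Fin 2) → ℝ,
      IsProbDist p ∧ InfoConstraints E5 2 p ∧ h = Hent 2 p Finset.univ}, h ≤ Real.logb 2 5 := by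
    rintro h ⟨p, hprob, hinfo, rfl⟩
    exact hent_upper hprob hinfo
  rw [graphEntropy]
  exact le_antisymm (csSup_le ⟨_, hmem⟩ hub) (le_csSup ⟨_, hub⟩ hmem)

end Part3

/-- For the bidirected pentagon over a two-letter alphabet, the public
guessing number is strictly smaller than the private entropy (= guessing number):
`g^public(C5,2) ≤ 5 − log_2 7 < log_2 5 = E(C5,2) = g(C5,2)`. -/
theorem pentagon_public_lt_private :
    (Fintype.card (Fin 5) : ℝ) - indexCodeLen E5 2 ≤ 5 - Real.logb 2 7
    ∧ (5 : ℝ) - Real.logb 2 7 < Real.logb 2 5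
    ∧ Real.logb 2 5 = graphEntropy E5 2
    ∧ graphEntropy E5 2 = guessingNumber E5 2 := by
  refine ⟨?_, part2, graphEntropy_eq.symm, ?_⟩
  · have h7 := logb7_le_indexCodeLen
    have hc : (Fintype.card (Fin 5) : ℝ) = 5 := by simp
    rw [hc]
    linarith
  · rw [graphEntropy_eq, guessingNumber_eq]
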